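/- Let i, j ∈ ZMod r with i ≠ 0, j ≠ i and j ≠ −i, and set b := 2(j−i)·(3i)⁻¹ (so b ≠ 0 and b ≠ −4/3) and c := 4·b⁻¹ + 3, all in ZMod r. Then χ(3·i·b) · ∑_{a ∈ ZMod r} χ( 2(j−i) + 3·i·((2a+1)·(a²+a+1)⁻¹)² ) = ∑_{x ∈ ZMod r} χ((x−3)² + 4·c·x) + ∑_{x ∈ ZMod r} χ(x)·χ((x−3)² + 4·c·x). -/

import Mathlib

open Finset

open scoped Classical

/-- The quadratic character of `ZMod r` with values in `ℤ`:
`χ(m) = 1` if `m` is a nonzero square, `−1` if `m` is a nonsquare, `χ(0) = 0`. -/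
noncomputable def chi (r : ℕ) (m : ZMod r) : ℤ :=
  if m = 0 then 0 else if IsSquare m then 1 else -1

/-- With `b = 2(j−i)(3i)⁻¹` and `c = 4b⁻¹ + 3`,
`χ(3ib)·∑_a χ(2(j−i) + 3i((2a+1)(a²+a+1)⁻¹)²)
  = ∑_x χ((x−3)² + 4cx) + ∑_x χ(x)·χ((x−3)² + 4cx)`. -/
theorem stmt14 (r : ℕ) [NeZero r] (hr : r.Prime) (hodd : Odd r) (h3 : r % 3 = 2)
    (i j : ZMod r) (hi : i ≠ 0) (hji : j ≠ i) (hji' : j ≠ -i)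
    (b c : ZMod r) (hb : b = 2 * (j - i) * (3 * i)⁻¹) (hc : c = 4 * b⁻¹ + 3) :
    chi r (3 * i * b) *
        ∑ a : ZMod r, chi r (2 * (j - i) + 3 * i * ((2 * a + 1) * (a ^ 2 + a + 1)⁻¹) ^ 2) =
      (∑ x : ZMod r, chi r ((x - 3) ^ 2 + 4 * c * x)) +
        ∑ x : ZMod r, chi r x * chi r ((x - 3) ^ 2 + 4 * c * x) := by
  haveI : Fact r.Prime := ⟨hr⟩
  have hr2 : r ≠ 2 := by rintro rfl; exact (by decide : ¬ Odd 2) hodd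
  have hr3 : r ≠ 3 := by omega
  have h2 : (2 : ZMod r) ≠ 0 := by
    intro h
    have : r ∣ 2 := by
      have := (ZMod.natCast_eq_zero_iff 2 r).mp (by exact_mod_cast h)
      exact this
    rcases (Nat.prime_two.eq_one_or_self_of_dvd r this).symm.imp id id with h' | h'
    · exact hr2 h'
    · exact hr.one_lt.ne' h'
  have h3' : (3 : ZMod r) ≠ 0 := by
    intro h
    have hd : r ∣ 3 := (ZMod.natCast_eq_zero_iff 3 r).mp (by exact_mod_cast h)
    have := hr.two_le
    rcases (Nat.prime_three.eq_one_or_self_of_dvd r hd).symm.imp id id with h' | h' <;> omega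
  have h4 : (4 : ZMod r) ≠ 0 := by
    have : (4 : ZMod r) = 2 * 2 := by norm_num
    rw [this]; exact mul_ne_zero h2 h2
  -- a² + a + 1 ≠ 0
  have hA : ∀ a : ZMod r, a ^ 2 + a + 1 ≠ 0 := by
    intro a h
    have ha1 : a ≠ 1 := by rintro rfl; apply h3'; linear_combination h
    have ha0 : a ≠ 0 := by rintro rfl; simpa using h
    have ha3 : a ^ 3 = 1 := by linear_combination (a - 1) * h
    have hdvd : orderOf a ∣ 3 := orderOf_dvd_of_pow_eq_one ha3
    have ho3 : orderOf a = 3 := by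
      rcases (Nat.prime_three.eq_one_or_self_of_dvd _ hdvd) with h' | h'
      · exact absurd (orderOf_eq_one_iff.mp h') ha1
      · exact h'
    have hcard : a ^ (r - 1) = 1 := ZMod.pow_card_sub_one_eq_one ha0
    have : (3 : ℕ) ∣ r - 1 := ho3 ▸ orderOf_dvd_of_pow_eq_one hcard
    obtain ⟨k, hk⟩ := this
    have := hr.two_le
    omega
  have hb0 : b ≠ 0 := by
    rw [hb]
    exact mul_ne_zero (mul_ne_zero h2 (sub_ne_zero.mpr hji))
      (inv_ne_zero (mul_ne_zero h3' hi))
  have h2ji : 2 * (j - i) = 3 * i * b := by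
    rw [hb]; field_simp
  have hchar2 : ringChar (ZMod r) ≠ 2 := by rw [ZMod.ringChar_zmod_n]; exact hr2
  set q := quadraticChar (ZMod r) with hq
  have hchi : ∀ m : ZMod r, chi r m = q m := by
    intro m
    rw [hq, quadraticChar_apply, quadraticCharFun, chi]
    split_ifs <;> rfl
  -- fiberwise square-root counting
  have key : ∀ G : ZMod r → ℤ,
      ∑ y : ZMod r, G (y ^ 2) = ∑ x : ZMod r, (q x + 1) * G x := by
    intro G
    have h1 : ∑ y : ZMod r, G (y ^ 2)
        = ∑ x : ZMod r, ∑ _y ∈ univ.filter (fun y : ZMod r => y ^ 2 = x), G x := by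
      rw [Finset.sum_fiberwise_eq_sum_filter' univ univ (fun y : ZMod r => y ^ 2) G]
      simp
    rw [h1]
    refine Finset.sum_congr rfl fun x _ => ?_
    rw [Finset.sum_const, nsmul_eq_mul]
    congr 1
    have := quadraticChar_card_sqrts hchar2 x
    rw [← this]
    congr 1
    rw [Set.toFinset_setOf]
  -- per-term identity on the left
  have term : ∀ a : ZMod r,
      q (3 * i * b) * q (2 * (j - i) + 3 * i * ((2 * a + 1) * (a ^ 2 + a + 1)⁻¹) ^ 2)
        = q (((2 * a + 1) ^ 2 - 3) ^ 2 + 4 * c * (2 * a + 1) ^ 2) := by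
    intro a
    have hAa := hA a
    have hs : (3 * i * b * (4 * (a ^ 2 + a + 1))⁻¹) ≠ 0 :=
      mul_ne_zero (mul_ne_zero (mul_ne_zero h3' hi) hb0)
        (inv_ne_zero (mul_ne_zero h4 hAa))
    have hid : 3 * i * b * (2 * (j - i) + 3 * i * ((2 * a + 1) * (a ^ 2 + a + 1)⁻¹) ^ 2)
        = (3 * i * b * (4 * (a ^ 2 + a + 1))⁻¹) ^ 2
            * (((2 * a + 1) ^ 2 - 3) ^ 2 + 4 * c * (2 * a + 1) ^ 2) := by
      rw [h2ji, hc]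
      have hAa' : a * (a + 1) + 1 ≠ 0 := by convert hAa using 1; ring
      field_simp
      ring
    rw [← map_mul, hid, map_mul, quadraticChar_sq_one' hs, one_mul]
  -- bijection a ↦ 2a + 1
  have hbij : Function.Bijective (fun a : ZMod r => 2 * a + 1) := by
    refine Finite.injective_iff_bijective.mp fun x y hxy => ?_
    have h2x : 2 * x = 2 * y := by linear_combination hxy
    exact mul_left_cancel₀ h2 h2x
  simp only [hchi]
  rw [Finset.mul_sum]
  calc
    ∑ a : ZMod r,
        q (3 * i * b) * q (2 * (j - i) + 3 * i * ((2 * a + 1) * (a ^ 2 + a + 1)⁻¹) ^ 2)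
      = ∑ a : ZMod r, q (((2 * a + 1) ^ 2 - 3) ^ 2 + 4 * c * (2 * a + 1) ^ 2) :=
        Finset.sum_congr rfl fun a _ => term a
    _ = ∑ y : ZMod r, q ((y ^ 2 - 3) ^ 2 + 4 * c * y ^ 2) :=
        Fintype.sum_bijective _ hbij _ _ (fun a => rfl)
    _ = ∑ x : ZMod r, (q x + 1) * q ((x - 3) ^ 2 + 4 * c * x) :=
        key (fun x => q ((x - 3) ^ 2 + 4 * c * x))
    _ = (∑ x : ZMod r, q ((x - 3) ^ 2 + 4 * c * x))
          + ∑ x : ZMod r, q x * q ((x - 3) ^ 2 + 4 * c * x) := by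
        rw [← Finset.sum_add_distrib]
        exact Finset.sum_congr rfl fun x _ => by ring
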